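/- arXiv:2010.12165 — 4 statements merged into one kernel-verified Lean document; each statement's English description precedes it below -/
import Mathlib

section
/- If f : ℝ → ℝ is continuously differentiable on [-ρ,ρ], f(ρ) = 0 = f(-ρ), and f is nonconstant on [-ρ,ρ] (so that min f' < 0 on [-ρ,ρ]), then setting ω₀⁺ = -1/(min_{|ξ|≤ρ} f'(ξ)) > 0, for all ξ ∈ [-ρ,ρ] and all ω ∈ (0, ω₀⁺] we have |ξ + ω f(ξ)| ≤ ρ. -/
open scoped BigOperators Kronecker

attribute [local instance] Matrix.linftyOpNormedRing Matrix.linftyOpNormedAlgebra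

/-- The matrix `∞`-norm: maximum absolute row sum (the operator norm induced by the
vector supremum norm). -/
noncomputable def rowSumNorm {n : Type*} [Fintype n] (A : Matrix n n ℝ) : ℝ :=
  ⨆ i, ∑ j, |A i j|

/-- The logarithmic `∞`-norm `μ_∞(A) = max_i (a_ii + ∑_{j≠i} |a_ij|)`. -/
noncomputable def logNormInf {n : Type*} [Fintype n] [DecidableEq n] (A : Matrix n n ℝ) : ℝ :=
  ⨆ i, (A i i + ∑ j ∈ Finset.univ.erase i, |A i j|)

theorem stmt_0 (ρ : ℝ) (hρ : 0 < ρ) (f f' : ℝ → ℝ)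
    (hderiv : ∀ x ∈ Set.Icc (-ρ) ρ, HasDerivAt f (f' x) x)
    (hcont : ContinuousOn f' (Set.Icc (-ρ) ρ))
    (hfρ : f ρ = 0) (hfnρ : f (-ρ) = 0)
    (hnc : ∃ x ∈ Set.Icc (-ρ) ρ, ∃ y ∈ Set.Icc (-ρ) ρ, f x ≠ f y) :
    0 < -1 / sInf (f' '' Set.Icc (-ρ) ρ) ∧
    ∀ ξ ∈ Set.Icc (-ρ) ρ, ∀ ω : ℝ, 0 < ω → ω ≤ -1 / sInf (f' '' Set.Icc (-ρ) ρ) →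
      |ξ + ω * f ξ| ≤ ρ := by
  set S := Set.Icc (-ρ : ℝ) ρ with hS
  have hcontf : ContinuousOn f S := fun x hx =>
    (hderiv x hx).continuousAt.continuousWithinAt
  have hbdd : BddBelow (f' '' S) :=
    (isCompact_Icc.image_of_continuousOn hcont).bddBelow
  set m := sInf (f' '' S) with hm
  have hm_le : ∀ x ∈ S, m ≤ f' x := fun x hx => csInf_le hbdd ⟨x, hx, rfl⟩
  -- find c ∈ Icc with f c ≠ 0
  obtain ⟨x, hx, y, hy, hxy⟩ := hnc
  have hc : ∃ c ∈ S, f c ≠ 0 := by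
    by_cases h : f x = 0
    · exact ⟨y, hy, by rw [h] at hxy; exact fun h' => hxy h'.symm⟩
    · exact ⟨x, hx, h⟩
  obtain ⟨c, hcS, hfc⟩ := hc
  have hcρ : c ≠ ρ := fun h => hfc (h ▸ hfρ)
  have hcnρ : c ≠ -ρ := fun h => hfc (h ▸ hfnρ)
  have hclt : c < ρ := lt_of_le_of_ne hcS.2 hcρ
  have hcgt : -ρ < c := lt_of_le_of_ne hcS.1 (Ne.symm hcnρ)
  -- m < 0
  have hmneg : m < 0 := by
    rcases lt_or_gt_of_ne hfc with hneg | hpos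
    · -- f c < 0 : MVT on [-ρ, c]
      have hsub : Set.Icc (-ρ) c ⊆ S := Set.Icc_subset_Icc le_rfl hcS.2
      obtain ⟨d, hd, hd'⟩ := exists_hasDerivAt_eq_slope f f' hcgt
        (hcontf.mono hsub)
        (fun z hz => hderiv z (hsub (Set.mem_Icc.mpr ⟨le_of_lt hz.1, le_of_lt hz.2⟩)))
      have hdS : d ∈ S := hsub ⟨le_of_lt hd.1, le_of_lt hd.2⟩
      have : f' d < 0 := by
        rw [hd', hfnρ]
        apply div_neg_of_neg_of_pos <;> linarith
      exact lt_of_le_of_lt (hm_le d hdS) this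
    · -- f c > 0 : MVT on [c, ρ]
      have hsub : Set.Icc c ρ ⊆ S := Set.Icc_subset_Icc hcS.1 le_rfl
      obtain ⟨d, hd, hd'⟩ := exists_hasDerivAt_eq_slope f f' hclt
        (hcontf.mono hsub)
        (fun z hz => hderiv z (hsub (Set.mem_Icc.mpr ⟨le_of_lt hz.1, le_of_lt hz.2⟩)))
      have hdS : d ∈ S := hsub ⟨le_of_lt hd.1, le_of_lt hd.2⟩
      have : f' d < 0 := by
        rw [hd', hfρ]
        apply div_neg_of_neg_of_pos <;> linarith
      exact lt_of_le_of_lt (hm_le d hdS) this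
  have hω₀ : 0 < -1 / m := div_pos_of_neg_of_neg (by norm_num) hmneg
  refine ⟨hω₀, fun ξ hξ ω hω hωle => ?_⟩
  have hkey : ω * (-m) ≤ 1 := by
    have h1 : -1 / m = 1 / (-m) := by rw [div_neg, neg_div]
    rw [h1, le_div_iff₀ (by linarith)] at hωle
    linarith
  rw [abs_le]
  constructor
  · -- -ρ ≤ ξ + ω * f ξ
    rcases eq_or_lt_of_le hξ.1 with heq | hlt
    · rw [← heq, hfnρ]; linarith
    · have hsub : Set.Icc (-ρ) ξ ⊆ S := Set.Icc_subset_Icc le_rfl hξ.2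
      obtain ⟨d, hd, hd'⟩ := exists_hasDerivAt_eq_slope f f' hlt
        (hcontf.mono hsub)
        (fun z hz => hderiv z (hsub (Set.mem_Icc.mpr ⟨le_of_lt hz.1, le_of_lt hz.2⟩)))
      have hdS : d ∈ S := hsub ⟨le_of_lt hd.1, le_of_lt hd.2⟩
      have hmd : m ≤ f' d := hm_le d hdS
      have hfξ : f ξ = f' d * (ξ + ρ) := by
        rw [hfnρ] at hd'
        have h2 : ξ + ρ ≠ 0 := by linarith
        rw [eq_div_iff (by linarith : ξ - -ρ ≠ 0)] at hd'
        linear_combination -hd'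
      nlinarith [mul_le_mul_of_nonneg_left hmd (le_of_lt hω),
        mul_le_mul_of_nonneg_right hkey (by linarith : (0:ℝ) ≤ ξ + ρ)]
  · -- ξ + ω * f ξ ≤ ρ
    rcases eq_or_lt_of_le hξ.2 with heq | hlt
    · rw [heq, hfρ]; linarith
    · have hsub : Set.Icc ξ ρ ⊆ S := Set.Icc_subset_Icc hξ.1 le_rfl
      obtain ⟨d, hd, hd'⟩ := exists_hasDerivAt_eq_slope f f' hlt
        (hcontf.mono hsub)
        (fun z hz => hderiv z (hsub (Set.mem_Icc.mpr ⟨le_of_lt hz.1, le_of_lt hz.2⟩)))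
      have hdS : d ∈ S := hsub ⟨le_of_lt hd.1, le_of_lt hd.2⟩
      have hmd : m ≤ f' d := hm_le d hdS
      have hfξ : f ξ = -(f' d * (ρ - ξ)) := by
        rw [hfρ] at hd'
        rw [eq_div_iff (by linarith : ρ - ξ ≠ 0)] at hd'
        linear_combination hd'
      nlinarith [mul_le_mul_of_nonneg_left hmd (le_of_lt hω),
        mul_le_mul_of_nonneg_right hkey (by linarith : (0:ℝ) ≤ ρ - ξ)]
end

section
/- Suppose ‖e^{ωL}‖_∞ ≤ 1 for all ω > 0, and f : ℝ → ℝ satisfies |ξ + ω f(ξ)| ≤ ρ for all ξ ∈ [-ρ,ρ] and ω ∈ (0, ω₀⁺]. If ‖uⁿ‖_∞ ≤ ρ and 0 < τ ≤ ω₀⁺, then the first-order integrating factor step u^{n+1} = e^{τL}(uⁿ + τ f(uⁿ)) satisfies ‖u^{n+1}‖_∞ ≤ ρ. -/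
open scoped BigOperators Kronecker

attribute [local instance] Matrix.linftyOpNormedRing Matrix.linftyOpNormedAlgebra

theorem stmt_11 {m : ℕ} (L : Matrix (Fin m) (Fin m) ℝ) (f : ℝ → ℝ)
    (ρ ω₀ τ : ℝ) (hρ : 0 < ρ) (hω₀ : 0 < ω₀)
    (hL : ∀ ω : ℝ, 0 < ω → rowSumNorm (NormedSpace.exp (ω • L)) ≤ 1)
    (hf : ∀ ξ : ℝ, |ξ| ≤ ρ → ∀ ω : ℝ, 0 < ω → ω ≤ ω₀ → |ξ + ω * f ξ| ≤ ρ)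
    (u : Fin m → ℝ) (hu : ‖u‖ ≤ ρ) (hτ0 : 0 < τ) (hτ : τ ≤ ω₀) :
    ‖(NormedSpace.exp (τ • L)).mulVec (u + τ • fun i => f (u i))‖ ≤ ρ := by
  set A := NormedSpace.exp (τ • L)
  have hw : ‖u + τ • fun i => f (u i)‖ ≤ ρ := by
    rw [pi_norm_le_iff_of_nonneg hρ.le]
    intro i
    have hui : |u i| ≤ ρ := le_trans (norm_le_pi_norm u i) hu
    have := hf (u i) hui τ hτ0 hτ
    simpa [Real.norm_eq_abs] using this
  have hA : ‖A‖ ≤ 1 := by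
    rw [Matrix.linfty_opNorm_def]
    have hrow : ∀ i, (∑ j, |A i j|) ≤ 1 := by
      intro i
      have h1 := hL τ hτ0
      rw [rowSumNorm] at h1
      exact le_trans (le_ciSup (Set.Finite.bddAbove (Set.finite_range fun i => ∑ j, |A i j|)) i) h1
    have : ((Finset.univ : Finset (Fin m)).sup fun i => ∑ j, ‖A i j‖₊) ≤ 1 := by
      apply Finset.sup_le
      intro i _
      have := hrow i
      rw [← NNReal.coe_le_coe]
      push_cast
      simpa [NNReal.coe_sum, coe_nnnorm, Real.norm_eq_abs] using this
    exact_mod_cast this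
  calc ‖A.mulVec (u + τ • fun i => f (u i))‖
      ≤ ‖A‖ * ‖u + τ • fun i => f (u i)‖ := Matrix.linfty_opNorm_mulVec _ _
    _ ≤ 1 * ρ := by
        apply mul_le_mul hA hw (norm_nonneg _) zero_le_one
    _ = ρ := one_mul ρ
end

section
/- Suppose ‖e^{ωL}‖_∞ ≤ 1 for all ω > 0, and f satisfies |ξ + ω f(ξ)| ≤ ρ for all ξ ∈ [-ρ,ρ], ω ∈ (0, ω₀⁺]. If ‖uⁿ‖_∞ ≤ ρ and 0 < τ ≤ ω₀⁺, then the second-order IFRK scheme u⁽¹⁾ = e^{τL}(uⁿ + τ f(uⁿ)), u^{n+1} = (1/2)e^{τL}uⁿ + (1/2)(u⁽¹⁾ + τ f(u⁽¹⁾)) satisfies ‖u⁽¹⁾‖_∞ ≤ ρ and ‖u^{n+1}‖_∞ ≤ ρ. -/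
open scoped BigOperators Kronecker

attribute [local instance] Matrix.linftyOpNormedRing Matrix.linftyOpNormedAlgebra

lemma norm_le_rowSumNorm {n : Type*} [Fintype n] [DecidableEq n] (A : Matrix n n ℝ) :
    ‖A‖ ≤ rowSumNorm A := by
  rw [Matrix.linfty_opNorm_def]
  rcases isEmpty_or_nonempty n with h | h
  · simp [rowSumNorm, Real.iSup_of_isEmpty]
  · obtain ⟨i, hi⟩ := Finset.exists_mem_eq_sup Finset.univ Finset.univ_nonempty
      (fun i : n => ∑ j : n, ‖A i j‖₊)
    rw [hi.2]
    push_cast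
    have : ∑ j, (‖A i j‖ : ℝ) = ∑ j, |A i j| := by simp [Real.norm_eq_abs]
    rw [this]
    exact le_ciSup (Set.Finite.bddAbove (Set.finite_range fun i : n => ∑ j : n, |A i j|)) i

lemma mulVec_norm_le {n : Type*} [Fintype n] [DecidableEq n] (A : Matrix n n ℝ) (v : n → ℝ) :
    ‖A.mulVec v‖ ≤ rowSumNorm A * ‖v‖ :=
  (Matrix.linfty_opNorm_mulVec A v).trans
    (mul_le_mul_of_nonneg_right (norm_le_rowSumNorm A) (norm_nonneg v))

theorem stmt_12 {m : ℕ} (L : Matrix (Fin m) (Fin m) ℝ) (f : ℝ → ℝ)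
    (ρ ω₀ τ : ℝ) (hρ : 0 < ρ) (hω₀ : 0 < ω₀)
    (hL : ∀ ω : ℝ, 0 < ω → rowSumNorm (NormedSpace.exp (ω • L)) ≤ 1)
    (hf : ∀ ξ : ℝ, |ξ| ≤ ρ → ∀ ω : ℝ, 0 < ω → ω ≤ ω₀ → |ξ + ω * f ξ| ≤ ρ)
    (u u1 u' : Fin m → ℝ) (hu : ‖u‖ ≤ ρ) (hτ0 : 0 < τ) (hτ : τ ≤ ω₀)
    (hu1 : u1 = (NormedSpace.exp (τ • L)).mulVec (u + τ • fun i => f (u i)))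
    (hu' : u' = (1 / 2 : ℝ) • (NormedSpace.exp (τ • L)).mulVec u
        + (1 / 2 : ℝ) • (u1 + τ • fun i => f (u1 i))) :
    ‖u1‖ ≤ ρ ∧ ‖u'‖ ≤ ρ := by
  have hstep : ∀ v : Fin m → ℝ, ‖v‖ ≤ ρ → ‖v + τ • fun i => f (v i)‖ ≤ ρ := by
    intro v hv
    rw [pi_norm_le_iff_of_nonneg hρ.le]
    intro i
    have hvi : |v i| ≤ ρ := le_trans (norm_le_pi_norm v i) hv
    simpa [Real.norm_eq_abs] using hf (v i) hvi τ hτ0 hτ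
  have hE := hL τ hτ0
  have hEv : ∀ v : Fin m → ℝ, ‖v‖ ≤ ρ →
      ‖(NormedSpace.exp (τ • L)).mulVec v‖ ≤ ρ := by
    intro v hv
    calc ‖(NormedSpace.exp (τ • L)).mulVec v‖
        ≤ rowSumNorm (NormedSpace.exp (τ • L)) * ‖v‖ := mulVec_norm_le _ v
      _ ≤ 1 * ρ := mul_le_mul hE hv (norm_nonneg v) zero_le_one
      _ = ρ := one_mul ρ
  have h1 : ‖u1‖ ≤ ρ := hu1 ▸ hEv _ (hstep u hu)
  refine ⟨h1, ?_⟩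
  rw [hu']
  calc ‖(1 / 2 : ℝ) • (NormedSpace.exp (τ • L)).mulVec u
        + (1 / 2 : ℝ) • (u1 + τ • fun i => f (u1 i))‖
      ≤ ‖(1 / 2 : ℝ) • (NormedSpace.exp (τ • L)).mulVec u‖
        + ‖(1 / 2 : ℝ) • (u1 + τ • fun i => f (u1 i))‖ := norm_add_le _ _
    _ = (1 / 2) * ‖(NormedSpace.exp (τ • L)).mulVec u‖
        + (1 / 2) * ‖u1 + τ • fun i => f (u1 i)‖ := by
        rw [norm_smul, norm_smul]; norm_num
    _ ≤ (1 / 2) * ρ + (1 / 2) * ρ := by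
        gcongr
        · exact hEv u hu
        · exact hstep u1 h1
    _ = ρ := by ring
end

section
/- Suppose ‖e^{ωL}‖_∞ ≤ 1 for all ω > 0, and f satisfies both |ξ + ω f(ξ)| ≤ ρ for all ξ ∈ [-ρ,ρ], ω ∈ (0, ω₀⁺] and |ξ - ω f(ξ)| ≤ ρ for all ξ ∈ [-ρ,ρ], ω ∈ (0, ω₀⁻]. If ‖uⁿ‖_∞ ≤ ρ and 0 < τ ≤ (2/3)·min{ω₀⁺, ω₀⁻}, then all stages of the classical four-stage fourth-order IFRK scheme u⁽¹⁾ = e^{(τ/2)L}(uⁿ + (τ/2)f(uⁿ)), u⁽²⁾ = (1/2)e^{(τ/2)L}(uⁿ - (τ/2)f(uⁿ)) + (1/2)(u⁽¹⁾ + τ f(u⁽¹⁾)), u⁽³⁾ = (1/9)e^{τL}(uⁿ - τ f(uⁿ)) + (2/9)e^{(τ/2)L}(u⁽¹⁾ - (3τ/2)f(u⁽¹⁾)) + (2/3)e^{(τ/2)L}(u⁽²⁾ + (3τ/2)f(u⁽²⁾)), u^{n+1} = (1/3)e^{(τ/2)L}(u⁽¹⁾ + (τ/2)f(u⁽¹⁾))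 + (1/3)e^{(τ/2)L}u⁽²⁾ + (1/3)(u⁽³⁾ + (τ/2)f(u⁽³⁾)) satisfy ‖u⁽¹⁾‖_∞, ‖u⁽²⁾‖_∞, ‖u⁽³⁾‖_∞, ‖u^{n+1}‖_∞ ≤ ρ. -/
open scoped BigOperators Kronecker

attribute [local instance] Matrix.linftyOpNormedRing Matrix.linftyOpNormedAlgebra

theorem stmt_14 {m : ℕ} (L : Matrix (Fin m) (Fin m) ℝ) (f : ℝ → ℝ)
    (ρ ω₀p ω₀m τ : ℝ) (hρ : 0 < ρ) (hω₀p : 0 < ω₀p) (hω₀m : 0 < ω₀m)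
    (hL : ∀ ω : ℝ, 0 < ω → rowSumNorm (NormedSpace.exp (ω • L)) ≤ 1)
    (hfp : ∀ ξ : ℝ, |ξ| ≤ ρ → ∀ ω : ℝ, 0 < ω → ω ≤ ω₀p → |ξ + ω * f ξ| ≤ ρ)
    (hfm : ∀ ξ : ℝ, |ξ| ≤ ρ → ∀ ω : ℝ, 0 < ω → ω ≤ ω₀m → |ξ - ω * f ξ| ≤ ρ)
    (u u1 u2 u3 u' : Fin m → ℝ) (hu : ‖u‖ ≤ ρ)
    (hτ0 : 0 < τ) (hτ : τ ≤ 2 / 3 * min ω₀p ω₀m)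
    (hu1 : u1 = (NormedSpace.exp ((τ / 2) • L)).mulVec
        (u + (τ / 2) • fun i => f (u i)))
    (hu2 : u2 = (1 / 2 : ℝ) • (NormedSpace.exp ((τ / 2) • L)).mulVec
        (u - (τ / 2) • fun i => f (u i))
        + (1 / 2 : ℝ) • (u1 + τ • fun i => f (u1 i)))
    (hu3 : u3 = (1 / 9 : ℝ) • (NormedSpace.exp (τ • L)).mulVec
        (u - τ • fun i => f (u i))
        + (2 / 9 : ℝ) • (NormedSpace.exp ((τ / 2) • L)).mulVec
            (u1 - (3 * τ / 2) • fun i => f (u1 i))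
        + (2 / 3 : ℝ) • (NormedSpace.exp ((τ / 2) • L)).mulVec
            (u2 + (3 * τ / 2) • fun i => f (u2 i)))
    (hu' : u' = (1 / 3 : ℝ) • (NormedSpace.exp ((τ / 2) • L)).mulVec
        (u1 + (τ / 2) • fun i => f (u1 i))
        + (1 / 3 : ℝ) • (NormedSpace.exp ((τ / 2) • L)).mulVec u2
        + (1 / 3 : ℝ) • (u3 + (τ / 2) • fun i => f (u3 i))) :
    ‖u1‖ ≤ ρ ∧ ‖u2‖ ≤ ρ ∧ ‖u3‖ ≤ ρ ∧ ‖u'‖ ≤ ρ := by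
  have hminp : min ω₀p ω₀m ≤ ω₀p := min_le_left _ _
  have hminm : min ω₀p ω₀m ≤ ω₀m := min_le_right _ _
  have hmin0 : 0 < min ω₀p ω₀m := lt_min hω₀p hω₀m
  have h32p : 3 * τ / 2 ≤ ω₀p := by nlinarith
  have h32m : 3 * τ / 2 ≤ ω₀m := by nlinarith
  have hτp : τ ≤ ω₀p := by nlinarith
  have hτm : τ ≤ ω₀m := by nlinarith
  -- forward Euler step preserves the bound
  have stepP : ∀ ω : ℝ, 0 < ω → ω ≤ ω₀p → ∀ v : Fin m → ℝ, ‖v‖ ≤ ρ →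
      ‖v + ω • fun i => f (v i)‖ ≤ ρ := by
    intro ω hω hωp v hv
    rw [pi_norm_le_iff_of_nonneg hρ.le]
    intro i
    have hvi : |v i| ≤ ρ := le_trans (by simpa using norm_le_pi_norm v i) hv
    simpa [Real.norm_eq_abs] using hfp (v i) hvi ω hω hωp
  -- backward Euler step preserves the bound
  have stepM : ∀ ω : ℝ, 0 < ω → ω ≤ ω₀m → ∀ v : Fin m → ℝ, ‖v‖ ≤ ρ →
      ‖v - ω • fun i => f (v i)‖ ≤ ρ := by
    intro ω hω hωm v hv
    rw [pi_norm_le_iff_of_nonneg hρ.le]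
    intro i
    have hvi : |v i| ≤ ρ := le_trans (by simpa using norm_le_pi_norm v i) hv
    simpa [Real.norm_eq_abs] using hfm (v i) hvi ω hω hωm
  -- multiplication by the exponential preserves the bound
  have expB : ∀ ω : ℝ, 0 < ω → ∀ v : Fin m → ℝ, ‖v‖ ≤ ρ →
      ‖(NormedSpace.exp (ω • L)).mulVec v‖ ≤ ρ := by
    intro ω hω v hv
    calc ‖(NormedSpace.exp (ω • L)).mulVec v‖
        ≤ ‖NormedSpace.exp (ω • L)‖ * ‖v‖ := Matrix.linfty_opNorm_mulVec _ _
      _ ≤ 1 * ρ := mul_le_mul (le_trans (norm_le_rowSumNorm _) (hL ω hω)) hv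
          (norm_nonneg _) zero_le_one
      _ = ρ := one_mul ρ
  -- convex combination of three vectors
  have comb : ∀ (a b c : Fin m → ℝ) (c1 c2 c3 : ℝ), 0 ≤ c1 → 0 ≤ c2 → 0 ≤ c3 →
      c1 + c2 + c3 = 1 → ‖a‖ ≤ ρ → ‖b‖ ≤ ρ → ‖c‖ ≤ ρ →
      ‖c1 • a + c2 • b + c3 • c‖ ≤ ρ := by
    intro a b c c1 c2 c3 h1 h2 h3 hs ha hb hc
    calc ‖c1 • a + c2 • b + c3 • c‖ ≤ ‖c1 • a‖ + ‖c2 • b‖ + ‖c3 • c‖ := norm_add₃_le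
      _ = c1 * ‖a‖ + c2 * ‖b‖ + c3 * ‖c‖ := by
          simp [norm_smul, Real.norm_eq_abs, abs_of_nonneg h1, abs_of_nonneg h2,
            abs_of_nonneg h3]
      _ ≤ c1 * ρ + c2 * ρ + c3 * ρ := by
          gcongr
      _ = ρ := by nlinarith
  have hτ2 : (0 : ℝ) < τ / 2 := by linarith
  have h32 : (0 : ℝ) < 3 * τ / 2 := by linarith
  have h1 : ‖u1‖ ≤ ρ := by
    rw [hu1]; exact expB _ hτ2 _ (stepP (τ / 2) hτ2 (by linarith) u hu)
  have h2 : ‖u2‖ ≤ ρ := by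
    rw [hu2]
    have ha : ‖(NormedSpace.exp ((τ / 2) • L)).mulVec
        (u - (τ / 2) • fun i => f (u i))‖ ≤ ρ :=
      expB _ hτ2 _ (stepM (τ / 2) hτ2 (by linarith) u hu)
    have hb : ‖u1 + τ • fun i => f (u1 i)‖ ≤ ρ := stepP τ hτ0 hτp u1 h1
    calc ‖(1 / 2 : ℝ) • _ + (1 / 2 : ℝ) • _‖ ≤ ‖(1 / 2 : ℝ) • _‖ + ‖(1 / 2 : ℝ) • _‖ :=
          norm_add_le _ _
      _ = (1 / 2) * ‖(NormedSpace.exp ((τ / 2) • L)).mulVec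
            (u - (τ / 2) • fun i => f (u i))‖
          + (1 / 2) * ‖u1 + τ • fun i => f (u1 i)‖ := by
          rw [norm_smul, norm_smul]; norm_num
      _ ≤ ρ := by nlinarith
  have h3 : ‖u3‖ ≤ ρ := by
    rw [hu3]
    refine comb _ _ _ _ _ _ (by norm_num) (by norm_num) (by norm_num) (by norm_num) ?_ ?_ ?_
    · exact expB _ hτ0 _ (stepM τ hτ0 hτm u hu)
    · exact expB _ hτ2 _ (stepM (3 * τ / 2) h32 h32m u1 h1)
    · exact expB _ hτ2 _ (stepP (3 * τ / 2) h32 h32p u2 h2)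
  have h4 : ‖u'‖ ≤ ρ := by
    rw [hu']
    refine comb _ _ _ _ _ _ (by norm_num) (by norm_num) (by norm_num) (by norm_num) ?_ ?_ ?_
    · exact expB _ hτ2 _ (stepP (τ / 2) hτ2 (by linarith) u1 h1)
    · exact expB _ hτ2 _ h2
    · exact stepP (τ / 2) hτ2 (by linarith) u3 h3
  exact ⟨h1, h2, h3, h4⟩
end
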